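/- Let P be a deterministic comparison matrix for N = 2^n players, σ a draw, and i* a player with wp(i*,P,σ) = 1. Let S be a finite set of unordered pairs of distinct players, and for ε ∈ [0,1] let P_S(ε) be obtained from P by changing, for each pair {a,b} ∈ S with winner w and loser l, the entries to P_wl = 1 − ε and P_lw = ε. Let c be the number of crucial pairs contained in S. Then ε ↦ wp(i*, P_S(ε), σ) is a polynomial function of ε with wp(i*, P_S(0), σ) = 1 and derivative at ε = 0 equal to −c; equivalently, wp(i*, P_S(ε), σ) = 1 − c·ε + ε²·Q(ε) for some polynomial Q. -/

import Mathlib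

/-- A perfect (balanced) binary tree of depth `n` with leaves labelled by `α`. -/
inductive BT (α : Type) : ℕ → Type
  | leaf : α → BT α 0
  | node {n : ℕ} : BT α n → BT α n → BT α (n + 1)

namespace BT

/-- The list of leaf labels, from left to right. -/
def leaves {α : Type} : ∀ {n : ℕ}, BT α n → List α
  | _, .leaf a => [a]
  | _, .node L R => L.leaves ++ R.leaves

/-- Relabel the leaves of a tree. -/
def map {α β : Type} (f : α → β) : ∀ {n : ℕ}, BT α n → BT β n
  | _, .leaf a => .leaf (f a)
  | _, .node L R => .node (L.map f) (R.map f)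

end BT

/-- Two trees represent the same draw iff one can be obtained from the other by
swapping the two children subtrees at internal nodes. -/
def BTequiv {α : Type} : ∀ {n : ℕ}, BT α n → BT α n → Prop
  | 0, .leaf a, .leaf b => a = b
  | _ + 1, .node L R, .node L' R' =>
      (BTequiv L L' ∧ BTequiv R R') ∨ (BTequiv L R' ∧ BTequiv R L')

/-- A draw: each of the `N` players occurs exactly once among the leaves. -/
def IsDraw {N n : ℕ} (t : BT (Fin N) n) : Prop :=
  ∀ i : Fin N, t.leaves.count i = 1

/-- The winning distribution of a knockout tournament: `wd P t i` is the probability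
that player `i` wins the (sub)tournament with draw `t` and comparison matrix `P`. -/
noncomputable def wd {N : ℕ} (P : Fin N → Fin N → ℝ) :
    ∀ {n : ℕ}, BT (Fin N) n → Fin N → ℝ
  | _, .leaf j => fun i => if i = j then 1 else 0
  | _, .node L R => fun i =>
      wd P L i * (∑ j, wd P R j * P i j) + wd P R i * (∑ j, wd P L j * P i j)

/-- `P` is a comparison matrix. -/
def IsCompMatrix {N : ℕ} (P : Fin N → Fin N → ℝ) : Prop :=
  ∀ i j : Fin N, i ≠ j → 0 ≤ P i j ∧ P i j ≤ 1 ∧ P i j + P j i = 1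

/-- `P` is deterministic: every off-diagonal entry is 0 or 1. -/
def IsDet {N : ℕ} (P : Fin N → Fin N → ℝ) : Prop :=
  ∀ i j : Fin N, i ≠ j → P i j = 0 ∨ P i j = 1

/-- The set `𝒫(P,ε)` of ε-perturbations of `P`. -/
def perturbs {N : ℕ} (P : Fin N → Fin N → ℝ) (ε : ℝ) : Set (Fin N → Fin N → ℝ) :=
  {P' | IsCompMatrix P' ∧ ∀ i j : Fin N, i ≠ j → |P' i j - P i j| ≤ ε}

/-- The ε-guaranteed winning probability `wp_ε(i,P,σ)`. -/
noncomputable def wpe {N n : ℕ} (i : Fin N) (P : Fin N → Fin N → ℝ) (ε : ℝ)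
    (t : BT (Fin N) n) : ℝ :=
  sInf ((fun P' => wd P' t i) '' perturbs P ε)

/-- The comparison matrix of the hard `n`-round tournament `H_n` (players 0-indexed):
for `i < j`, player `i` beats player `j` iff `i = j - 2 ^ v` where `2 ^ v` is the largest
power of 2 dividing `j` (in 0-indexed numbering). -/
noncomputable def hardP (n : ℕ) : Fin (2 ^ n) → Fin (2 ^ n) → ℝ := fun i j =>
  if i = j then 0
  else if (i : ℕ) < (j : ℕ) then
    (if (i : ℕ) + 2 ^ padicValNat 2 (j : ℕ) = (j : ℕ) then 1 else 0)
  else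
    (if (j : ℕ) + 2 ^ padicValNat 2 (i : ℕ) = (i : ℕ) then 0 else 1)

/-- The tree of depth `n` whose leaves are `s, s+1, …, s + 2^n - 1` from left to right. -/
def ordTree : (n : ℕ) → ℕ → BT ℕ n
  | 0, s => .leaf s
  | n + 1, s => .node (ordTree n s) (ordTree n (s + 2 ^ n))

/-- The identity draw, placing players `0, 1, …, 2^n - 1` on the leaves in order. -/
def idDraw (n : ℕ) : BT (Fin (2 ^ n)) n :=
  (ordTree n 0).map (fun k => ⟨k % 2 ^ n, Nat.mod_lt _ (by positivity)⟩)

/-- `f_p(x,y) = p(x+y) + (1-2p)xy`. -/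
def fp (p x y : ℝ) : ℝ := p * (x + y) + (1 - 2 * p) * x * y

/-- `B_p` on trees with real leaf labels. -/
noncomputable def Bp (p : ℝ) : ∀ {n : ℕ}, BT ℝ n → ℝ
  | _, .leaf x => x
  | _, .node L R => fp p (Bp p L) (Bp p R)

/-- Group a list into consecutive pairs. -/
def pairList {α : Type} : List α → List (α × α)
  | a :: b :: rest => (a, b) :: pairList rest
  | _ => []

/-- The first-round matches of a draw: the consecutive sibling pairs of leaves. -/
def firstPairs {α : Type} {n : ℕ} (t : BT α n) : List (α × α) := pairList t.leaves

/-- A draw is mixed (w.r.t. the set `B` of big players) if every first-round match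
pairs a big player with a small player. -/
def MixedDraw {N n : ℕ} (B : Finset (Fin N)) (t : BT (Fin N) n) : Prop :=
  ∀ q ∈ firstPairs t, ((q.1 ∈ B) ↔ q.2 ∉ B)

/-- Number of leaves labelled `1`. -/
noncomputable def ones {n : ℕ} (t : BT ℝ n) : ℕ := t.leaves.count 1

/-- All leaf labels are `0` or `1`. -/
def ZeroOne {n : ℕ} (t : BT ℝ n) : Prop := ∀ x ∈ t.leaves, x = 0 ∨ x = 1

/-- `P[kl←t]`: the matrix agreeing with `P` except `P k l = t` and `P l k = 1 - t`. -/
def updPair {N : ℕ} (P : Fin N → Fin N → ℝ) (k l : Fin N) (t : ℝ) :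
    Fin N → Fin N → ℝ :=
  fun i j => if i = k ∧ j = l then t else if i = l ∧ j = k then 1 - t else P i j

/-- Perturb a deterministic matrix: for each pair `(w, l) ∈ S` (winner first),
set `P w l = 1 - ε` and `P l w = ε`; other entries unchanged. -/
def detPerturb {N : ℕ} (P : Fin N → Fin N → ℝ) (S : Finset (Fin N × Fin N)) (ε : ℝ) :
    Fin N → Fin N → ℝ :=
  fun i j => if (i, j) ∈ S then 1 - ε else if (j, i) ∈ S then ε else P i j

/-- Swap the result of the single match between `a` and `b`. -/
def swapPair {N : ℕ} (P : Fin N → Fin N → ℝ) (a b : Fin N) : Fin N → Fin N → ℝ :=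
  fun i j => if i = a ∧ j = b then P b a else if i = b ∧ j = a then P a b else P i j

/-- The pair `(a,b)` (with `a` the winner) is crucial for `i` in `C(P,σ)`. -/
def Crucial {N n : ℕ} (P : Fin N → Fin N → ℝ) (σ : BT (Fin N) n) (i : Fin N)
    (a b : Fin N) : Prop :=
  a ≠ b ∧ P a b = 1 ∧ wd (swapPair P a b) σ i = 0

section AuxLemmas

open Polynomial

lemma wd_zero_of_not_mem {N : ℕ} (P : Fin N → Fin N → ℝ) :
    ∀ {n : ℕ} (t : BT (Fin N) n) (i : Fin N), i ∉ t.leaves → wd P t i = 0 := by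
  intro n t
  induction t with
  | leaf j =>
    intro i hi
    simp only [BT.leaves, List.mem_singleton] at hi
    simp [wd, hi]
  | node L R ihL ihR =>
    intro i hi
    simp only [BT.leaves, List.mem_append] at hi
    push_neg at hi
    simp [wd, ihL _ hi.1, ihR _ hi.2]

lemma wd_congr {N : ℕ} {P P' : Fin N → Fin N → ℝ} :
    ∀ {n : ℕ} (t : BT (Fin N) n),
      (∀ x ∈ t.leaves, ∀ y ∈ t.leaves, P x y = P' x y) → ∀ i, wd P t i = wd P' t i := by
  intro n t
  induction t with
  | leaf j => intro _ i; simp [wd]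
  | node L R ihL ihR =>
    intro h i
    have hL : ∀ x ∈ L.leaves, ∀ y ∈ L.leaves, P x y = P' x y := fun x hx y hy =>
      h x (by simp [BT.leaves, hx]) y (by simp [BT.leaves, hy])
    have hR : ∀ x ∈ R.leaves, ∀ y ∈ R.leaves, P x y = P' x y := fun x hx y hy =>
      h x (by simp [BT.leaves, hx]) y (by simp [BT.leaves, hy])
    by_cases hi : i ∈ (BT.node L R).leaves
    · have hsum1 : (∑ j, wd P R j * P i j) = ∑ j, wd P' R j * P' i j := by
        apply Finset.sum_congr rfl
        intro j _
        by_cases hj : j ∈ R.leaves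
        · rw [ihR hR j, h i hi j (by simp [BT.leaves, hj])]
        · rw [wd_zero_of_not_mem P R j hj, wd_zero_of_not_mem P' R j hj]; ring
      have hsum2 : (∑ j, wd P L j * P i j) = ∑ j, wd P' L j * P' i j := by
        apply Finset.sum_congr rfl
        intro j _
        by_cases hj : j ∈ L.leaves
        · rw [ihL hL j, h i hi j (by simp [BT.leaves, hj])]
        · rw [wd_zero_of_not_mem P L j hj, wd_zero_of_not_mem P' L j hj]; ring
      simp only [wd, ihL hL i, ihR hR i, hsum1, hsum2]
    · rw [wd_zero_of_not_mem P _ i hi, wd_zero_of_not_mem P' _ i hi]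

def AffineFn (f : ℝ → ℝ) : Prop := ∃ c d : ℝ, ∀ s, f s = c + d * s

lemma AffineFn.const (c : ℝ) : AffineFn (fun _ => c) := ⟨c, 0, fun s => by ring⟩

lemma AffineFn.add {f g : ℝ → ℝ} (hf : AffineFn f) (hg : AffineFn g) :
    AffineFn (fun s => f s + g s) := by
  obtain ⟨c, d, hf⟩ := hf; obtain ⟨c', d', hg⟩ := hg
  exact ⟨c + c', d + d', fun s => by simp only [hf, hg]; ring⟩

lemma AffineFn.mul_const {f : ℝ → ℝ} (hf : AffineFn f) (c : ℝ) :
    AffineFn (fun s => f s * c) := by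
  obtain ⟨a, d, hf⟩ := hf
  exact ⟨a * c, d * c, fun s => by simp only [hf]; ring⟩

lemma AffineFn.const_mul {f : ℝ → ℝ} (hf : AffineFn f) (c : ℝ) :
    AffineFn (fun s => c * f s) := by
  obtain ⟨a, d, hf⟩ := hf
  exact ⟨c * a, c * d, fun s => by simp only [hf]; ring⟩

lemma AffineFn.sum {ι : Type*} [Fintype ι] {f : ι → ℝ → ℝ} (h : ∀ j, AffineFn (f j)) :
    AffineFn (fun s => ∑ j, f j s) := by
  choose c d hcd using h
  refine ⟨∑ j, c j, ∑ j, d j, fun s => ?_⟩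
  simp only [hcd]
  rw [Finset.sum_add_distrib, Finset.sum_mul]

lemma updPair_entry_affine {N : ℕ} (M : Fin N → Fin N → ℝ) (a b i j : Fin N) :
    AffineFn (fun s => updPair M a b s i j) := by
  by_cases h1 : i = a ∧ j = b
  · exact ⟨0, 1, fun s => by simp [updPair, h1]⟩
  · by_cases h2 : i = b ∧ j = a
    · refine ⟨1, -1, fun s => ?_⟩
      obtain ⟨rfl, rfl⟩ := h2
      simp only [updPair, if_neg h1, and_self, if_true]
      ring
    · exact ⟨M i j, 0, fun s => by simp [updPair, h1, h2]⟩


lemma updPair_congr_out {N : ℕ} (M : Fin N → Fin N → ℝ) (a b : Fin N) {n : ℕ}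
    (t : BT (Fin N) n) (h : ¬(a ∈ t.leaves ∧ b ∈ t.leaves)) (s : ℝ) (i : Fin N) :
    wd (updPair M a b s) t i = wd M t i := by
  apply wd_congr
  intro x hx y hy
  simp only [updPair]
  split_ifs with h1 h2
  · exact absurd ⟨h1.1 ▸ hx, h1.2 ▸ hy⟩ h
  · exact absurd ⟨h2.2 ▸ hy, h2.1 ▸ hx⟩ h
  · rfl

lemma wd_updPair_affine {N : ℕ} (M : Fin N → Fin N → ℝ) (a b : Fin N) :
    ∀ {n : ℕ} (t : BT (Fin N) n), t.leaves.Nodup → ∀ i,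
      AffineFn (fun s => wd (updPair M a b s) t i) := by
  intro n t
  induction t with
  | leaf j =>
    intro _ i
    exact ⟨if i = j then 1 else 0, 0, fun s => by simp [wd]⟩
  | node L R ihL ihR =>
    intro hnd i
    have hnd' := hnd
    simp only [BT.leaves, List.nodup_append] at hnd'
    obtain ⟨hndL, hndR, hdisj⟩ := hnd'
    simp only [wd]
    by_cases hab : a ∈ L.leaves ∧ b ∈ L.leaves
    · -- both in L
      have haR : a ∉ R.leaves := fun hc => hdisj _ hab.1 _ hc rfl
      have hbR : b ∉ R.leaves := fun hc => hdisj _ hab.2 _ hc rfl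
      have hRconst : ∀ (s : ℝ) (j : Fin N), wd (updPair M a b s) R j = wd M R j :=
        fun s j => updPair_congr_out M a b R (fun hc => haR hc.1) s j
      have hsum : ∀ s : ℝ, (∑ j, wd (updPair M a b s) R j * updPair M a b s i j)
          = ∑ j, wd M R j * M i j := by
        intro s
        apply Finset.sum_congr rfl
        intro j _
        rw [hRconst s j]
        by_cases hja : j = a
        · subst hja; rw [wd_zero_of_not_mem M R j haR]; ring
        · by_cases hjb : j = b
          · subst hjb; rw [wd_zero_of_not_mem M R j hbR]; ring
          · have : updPair M a b s i j = M i j := by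
              simp [updPair, hjb, hja]
            rw [this]
      have hterm1 : AffineFn (fun s => wd (updPair M a b s) L i *
          (∑ j, wd (updPair M a b s) R j * updPair M a b s i j)) := by
        simp only [hsum]
        exact (ihL hndL i).mul_const _
      have hterm2 : AffineFn (fun s => wd (updPair M a b s) R i *
          (∑ j, wd (updPair M a b s) L j * updPair M a b s i j)) := by
        by_cases hi : i = a ∨ i = b
        · have hiR : i ∉ R.leaves := by
            rcases hi with rfl | rfl
            · exact haR
            · exact hbR
          have hz : ∀ s : ℝ, wd (updPair M a b s) R i = 0 := by
            intro s
            rw [updPair_congr_out M a b R (fun hc => haR hc.1)]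
            exact wd_zero_of_not_mem M R i hiR
          simp only [hz, zero_mul]
          exact AffineFn.const 0
        · push_neg at hi
          have hupd : ∀ (s : ℝ) (j : Fin N), updPair M a b s i j = M i j := by
            intro s j; simp [updPair, hi.1, hi.2]
          simp only [hRconst, hupd]
          exact (AffineFn.sum (fun j => (ihL hndL j).mul_const (M i j))).const_mul _
      exact hterm1.add hterm2
    · by_cases hab' : a ∈ R.leaves ∧ b ∈ R.leaves
      · -- both in R
        have haL : a ∉ L.leaves := fun hc => hdisj _ hc _ hab'.1 rfl
        have hbL : b ∉ L.leaves := fun hc => hdisj _ hc _ hab'.2 rfl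
        have hLconst : ∀ (s : ℝ) (j : Fin N), wd (updPair M a b s) L j = wd M L j :=
          fun s j => updPair_congr_out M a b L (fun hc => haL hc.1) s j
        have hsum : ∀ s : ℝ, (∑ j, wd (updPair M a b s) L j * updPair M a b s i j)
            = ∑ j, wd M L j * M i j := by
          intro s
          apply Finset.sum_congr rfl
          intro j _
          rw [hLconst s j]
          by_cases hja : j = a
          · subst hja; rw [wd_zero_of_not_mem M L j haL]; ring
          · by_cases hjb : j = b
            · subst hjb; rw [wd_zero_of_not_mem M L j hbL]; ring
            · have : updPair M a b s i j = M i j := by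
                simp [updPair, hjb, hja]
              rw [this]
        have hterm2 : AffineFn (fun s => wd (updPair M a b s) R i *
            (∑ j, wd (updPair M a b s) L j * updPair M a b s i j)) := by
          simp only [hsum]
          exact (ihR hndR i).mul_const _
        have hterm1 : AffineFn (fun s => wd (updPair M a b s) L i *
            (∑ j, wd (updPair M a b s) R j * updPair M a b s i j)) := by
          by_cases hi : i = a ∨ i = b
          · have hiL : i ∉ L.leaves := by
              rcases hi with rfl | rfl
              · exact haL
              · exact hbL
            have : ∀ s : ℝ, wd (updPair M a b s) L i = 0 := by
              intro s
              rw [updPair_congr_out M a b L (fun hc => haL hc.1)]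
              exact wd_zero_of_not_mem M L i hiL
            simp only [this, zero_mul]
            exact AffineFn.const 0
          · push_neg at hi
            have hupd : ∀ (s : ℝ) (j : Fin N), updPair M a b s i j = M i j := by
              intro s j; simp [updPair, hi.1, hi.2]
            simp only [hLconst, hupd]
            exact (AffineFn.sum (fun j => (ihR hndR j).mul_const (M i j))).const_mul _
        exact hterm1.add hterm2
      · -- split or absent
        have hLconst : ∀ (s : ℝ) (j : Fin N), wd (updPair M a b s) L j = wd M L j :=
          fun s j => updPair_congr_out M a b L hab s j
        have hRconst : ∀ (s : ℝ) (j : Fin N), wd (updPair M a b s) R j = wd M R j :=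
          fun s j => updPair_congr_out M a b R hab' s j
        simp only [hLconst, hRconst]
        exact ((AffineFn.sum (fun j =>
            (updPair_entry_affine M a b i j).const_mul (wd M R j))).const_mul (wd M L i)).add
          ((AffineFn.sum (fun j =>
            (updPair_entry_affine M a b i j).const_mul (wd M L j))).const_mul (wd M R i))


lemma AffineFn.one_sub_eval {f : ℝ → ℝ} (hf : AffineFn f) (ε : ℝ) :
    f (1 - ε) = f 1 + ε * (f 0 - f 1) := by
  obtain ⟨c, d, h⟩ := hf
  simp only [h]
  ring

lemma detPerturb_empty {N : ℕ} (P : Fin N → Fin N → ℝ) (ε : ℝ) :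
    detPerturb P ∅ ε = P := by
  funext i j
  simp [detPerturb]

lemma prod_ne_iff {N : ℕ} {i j a b : Fin N} : (i, j) ≠ (a, b) ↔ ¬(i = a ∧ j = b) := by
  simp [Prod.ext_iff]

lemma detPerturb_insert {N : ℕ} (P : Fin N → Fin N → ℝ) (a b : Fin N)
    (S : Finset (Fin N × Fin N)) (hab : a ≠ b) (h1 : (a, b) ∉ S) (h2 : (b, a) ∉ S) (ε : ℝ) :
    detPerturb P (insert (a, b) S) ε = updPair (detPerturb P S ε) a b (1 - ε) := by
  funext i j
  simp only [detPerturb, updPair, Finset.mem_insert]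
  by_cases e1 : i = a ∧ j = b
  · rw [e1.1, e1.2]
    simp [Prod.ext_iff]
  · by_cases e2 : i = b ∧ j = a
    · rw [e2.1, e2.2]
      have hne : b ≠ a := hab.symm
      simp [Prod.ext_iff, hab, hne, h1, h2]
    · have k1 : ¬(i, j) = (a, b) := by
        simp only [Prod.ext_iff]
        exact e1
      have k2 : ¬(j, i) = (a, b) := by
        simp only [Prod.ext_iff]
        intro hc
        exact e2 ⟨hc.2, hc.1⟩
      simp only [k1, k2, false_or, if_neg e1, if_neg e2, detPerturb]

lemma detPerturb_entry_1 {N : ℕ} (P : Fin N → Fin N → ℝ) (a b : Fin N)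
    (S : Finset (Fin N × Fin N)) (h1 : (a, b) ∉ S) (h2 : (b, a) ∉ S) (ε : ℝ) :
    detPerturb P S ε a b = P a b := by
  simp [detPerturb, h1, h2]

lemma updPair_self {N : ℕ} (M : Fin N → Fin N → ℝ) (a b : Fin N) (hab : a ≠ b)
    (h1 : M a b = 1) (h0 : M b a = 0) : updPair M a b 1 = M := by
  funext i j
  simp only [updPair]
  split_ifs with hc1 hc2
  · rw [hc1.1, hc1.2, h1]
  · rw [hc2.1, hc2.2, h0]
    norm_num
  · rfl

lemma updPair_zero_eq_swap {N : ℕ} (P : Fin N → Fin N → ℝ) (a b : Fin N)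
    (S : Finset (Fin N × Fin N)) (hab : a ≠ b) (h1 : (a, b) ∉ S) (h2 : (b, a) ∉ S)
    (hpa : P a b = 1) (hpb : P b a = 0) (ε : ℝ) :
    updPair (detPerturb P S ε) a b 0 = detPerturb (swapPair P a b) S ε := by
  funext i j
  simp only [updPair, detPerturb, swapPair]
  by_cases e1 : i = a ∧ j = b
  · rw [e1.1, e1.2]
    simp [h1, h2, hpb]
  · by_cases e2 : i = b ∧ j = a
    · rw [e2.1, e2.2]
      have hne : b ≠ a := hab.symm
      simp [h1, h2, hpa, hab, hne]
    · rw [if_neg e1, if_neg e2]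
      by_cases hS1 : (i, j) ∈ S
      · rw [if_pos hS1, if_pos hS1]
      · rw [if_neg hS1, if_neg hS1]
        by_cases hS2 : (j, i) ∈ S
        · rw [if_pos hS2, if_pos hS2]
        · rw [if_neg hS2, if_neg hS2, if_neg e1, if_neg e2]

lemma key_induction {N n : ℕ} (σ : BT (Fin N) n) (hnd : σ.leaves.Nodup) (i : Fin N)
    (S : Finset (Fin N × Fin N)) :
    ∀ P : Fin N → Fin N → ℝ,
      (∀ q ∈ S, q.1 ≠ q.2 ∧ P q.1 q.2 = 1 ∧ P q.2 q.1 = 0) →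
      ∃ R : Polynomial ℝ, (∀ ε, wd (detPerturb P S ε) σ i = R.eval ε) ∧
        R.coeff 0 = wd P σ i ∧
        R.coeff 1 = ∑ q ∈ S, (wd (swapPair P q.1 q.2) σ i - wd P σ i) := by
  induction S using Finset.induction_on with
  | empty =>
    intro P _
    refine ⟨Polynomial.C (wd P σ i), fun ε => by simp [detPerturb_empty], by simp, by simp⟩
  | insert q S hq ih =>
    intro P hS
    obtain ⟨a, b⟩ := q
    obtain ⟨hab, hPab, hPba⟩ := hS (a, b) (Finset.mem_insert_self _ _)
    have hba : (b, a) ∉ S := by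
      intro hc
      have h' := (hS (b, a) (Finset.mem_insert_of_mem hc)).2.1
      rw [show ((b, a) : Fin N × Fin N).1 = b from rfl,
        show ((b, a) : Fin N × Fin N).2 = a from rfl] at h'
      rw [hPba] at h'
      norm_num at h'
    have hS' : ∀ r ∈ S, r.1 ≠ r.2 ∧ P r.1 r.2 = 1 ∧ P r.2 r.1 = 0 :=
      fun r hr => hS r (Finset.mem_insert_of_mem hr)
    have hSswap : ∀ r ∈ S, r.1 ≠ r.2 ∧ swapPair P a b r.1 r.2 = 1 ∧
        swapPair P a b r.2 r.1 = 0 := by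
      intro r hr
      obtain ⟨k1, k2, k3⟩ := hS' r hr
      have er1 : ¬(r.1 = a ∧ r.2 = b) := by
        intro hc
        exact hq (by rwa [show r = (a, b) from Prod.ext_iff.mpr ⟨hc.1, hc.2⟩] at hr)
      have er2 : ¬(r.1 = b ∧ r.2 = a) := by
        intro hc
        exact hba (by rwa [show r = (b, a) from Prod.ext_iff.mpr ⟨hc.1, hc.2⟩] at hr)
      have er3 : ¬(r.2 = a ∧ r.1 = b) := fun hc => er2 ⟨hc.2, hc.1⟩
      have er4 : ¬(r.2 = b ∧ r.1 = a) := fun hc => er1 ⟨hc.2, hc.1⟩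
      refine ⟨k1, ?_, ?_⟩
      · simp only [swapPair, if_neg er1, if_neg er2]
        exact k2
      · simp only [swapPair, if_neg er3, if_neg er4]
        exact k3
    obtain ⟨R₁, hR₁e, hR₁0, hR₁1⟩ := ih P hS'
    obtain ⟨R₂, hR₂e, hR₂0, hR₂1⟩ := ih (swapPair P a b) hSswap
    have hmain : ∀ ε, wd (detPerturb P (insert (a, b) S) ε) σ i =
        R₁.eval ε + ε * (R₂.eval ε - R₁.eval ε) := by
      intro ε
      rw [detPerturb_insert P a b S hab hq hba ε]
      obtain ⟨c, d, hcd⟩ := wd_updPair_affine (detPerturb P S ε) a b σ hnd i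
      have hMab : detPerturb P S ε a b = 1 := by
        rw [detPerturb_entry_1 P a b S hq hba]; exact hPab
      have hMba : detPerturb P S ε b a = 0 := by
        rw [detPerturb_entry_1 P b a S hba hq]; exact hPba
      have eq1 : R₁.eval ε = c + d := by
        have h' : wd (updPair (detPerturb P S ε) a b 1) σ i = c + d * 1 := hcd 1
        rw [updPair_self (detPerturb P S ε) a b hab hMab hMba] at h'
        rw [← hR₁e ε, h']
        ring
      have eq0 : R₂.eval ε = c := by
        have h' : wd (updPair (detPerturb P S ε) a b 0) σ i = c + d * 0 := hcd 0
        rw [updPair_zero_eq_swap P a b S hab hq hba hPab hPba ε] at h'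
        rw [← hR₂e ε, h']
        ring
      have hfin : wd (updPair (detPerturb P S ε) a b (1 - ε)) σ i = c + d * (1 - ε) :=
        hcd (1 - ε)
      rw [hfin, eq1, eq0]
      ring
    refine ⟨R₁ + Polynomial.X * (R₂ - R₁), fun ε => by
      rw [hmain ε]; simp, ?_, ?_⟩
    · simp only [Polynomial.coeff_add, Polynomial.mul_coeff_zero, Polynomial.coeff_X_zero,
        zero_mul, add_zero]
      exact hR₁0
    · rw [Finset.sum_insert hq]
      have : (Polynomial.X * (R₂ - R₁)).coeff 1 = (R₂ - R₁).coeff 0 :=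
        Polynomial.coeff_X_mul (R₂ - R₁) 0
      simp only [Polynomial.coeff_add, this, Polynomial.coeff_sub, hR₂0, hR₁0, hR₁1]
      ring



lemma wd_det_indicator {N : ℕ} {Q : Fin N → Fin N → ℝ} (hC : IsCompMatrix Q)
    (hD : IsDet Q) :
    ∀ {n : ℕ} (t : BT (Fin N) n), t.leaves.Nodup →
      ∃ w, w ∈ t.leaves ∧ ∀ i, wd Q t i = if i = w then 1 else 0 := by
  intro n t
  induction t with
  | leaf j =>
    intro _
    exact ⟨j, by simp [BT.leaves], fun i => by simp [wd]⟩
  | node L R ihL ihR =>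
    intro hnd
    simp only [BT.leaves, List.nodup_append] at hnd
    obtain ⟨hndL, hndR, hdisj⟩ := hnd
    obtain ⟨wL, hwL, hWL⟩ := ihL hndL
    obtain ⟨wR, hwR, hWR⟩ := ihR hndR
    have hne : wL ≠ wR := fun hc => hdisj _ hwL _ hwR hc
    have hsum : ∀ i : Fin N, wd Q (BT.node L R) i =
        (if i = wL then 1 else 0) * Q i wR + (if i = wR then 1 else 0) * Q i wL := by
      intro i
      have s1 : (∑ j, wd Q R j * Q i j) = Q i wR := by
        simp [hWR, ite_mul]
      have s2 : (∑ j, wd Q L j * Q i j) = Q i wL := by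
        simp [hWL, ite_mul]
      have expand : wd Q (BT.node L R) i =
          wd Q L i * (∑ j, wd Q R j * Q i j) + wd Q R i * (∑ j, wd Q L j * Q i j) := rfl
      rw [expand, s1, s2, hWL i, hWR i]
    have hq := (hC wL wR hne).2.2
    rcases hD wL wR hne with h0 | h1
    · have hrl : Q wR wL = 1 := by linarith
      refine ⟨wR, by simp [BT.leaves, hwR], fun i => ?_⟩
      rw [hsum i]
      by_cases hiL : i = wL
      · subst hiL
        simp [hne, h0]
      · by_cases hiR : i = wR
        · subst hiR
          simp [hiL, hrl]
        · simp [hiL, hiR]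
    · refine ⟨wL, by simp [BT.leaves, hwL], fun i => ?_⟩
      have hrl : Q wR wL = 0 := by linarith
      rw [hsum i]
      by_cases hiL : i = wL
      · subst hiL
        simp [hne, h1]
      · by_cases hiR : i = wR
        · subst hiR
          simp [hiL, hrl]
        · simp [hiL, hiR]

lemma swapPair_cases {N : ℕ} (P : Fin N → Fin N → ℝ) (a b i j : Fin N) (hij : i ≠ j) :
    (swapPair P a b i j = P b a ∧ swapPair P a b j i = P a b ∧ i = a ∧ j = b) ∨
    (swapPair P a b i j = P a b ∧ swapPair P a b j i = P b a ∧ i = b ∧ j = a) ∨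
    (swapPair P a b i j = P i j ∧ swapPair P a b j i = P j i) := by
  by_cases c1 : i = a ∧ j = b
  · left
    have hab : a ≠ b := fun hc => hij (c1.1.trans (hc.trans c1.2.symm))
    have k1 : ¬(j = a ∧ i = b) := fun hc => hab (hc.1.symm.trans c1.2)
    refine ⟨by simp [swapPair, c1], ?_, c1.1, c1.2⟩
    simp only [swapPair]
    rw [if_neg k1, if_pos ⟨c1.2, c1.1⟩]
  · by_cases c2 : i = b ∧ j = a
    · right; left
      refine ⟨?_, ?_, c2.1, c2.2⟩
      · simp only [swapPair]
        rw [if_neg c1, if_pos c2]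
      · simp only [swapPair]
        rw [if_pos ⟨c2.2, c2.1⟩]
    · right; right
      have k1 : ¬(j = a ∧ i = b) := fun hc => c2 ⟨hc.2, hc.1⟩
      have k2 : ¬(j = b ∧ i = a) := fun hc => c1 ⟨hc.2, hc.1⟩
      constructor
      · simp only [swapPair]
        rw [if_neg c1, if_neg c2]
      · simp only [swapPair]
        rw [if_neg k1, if_neg k2]

lemma swapPair_isCompMatrix {N : ℕ} {P : Fin N → Fin N → ℝ} (hP : IsCompMatrix P)
    (a b : Fin N) : IsCompMatrix (swapPair P a b) := by
  intro i j hij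
  rcases swapPair_cases P a b i j hij with ⟨e1, e2, rfl, rfl⟩ | ⟨e1, e2, rfl, rfl⟩ |
    ⟨e1, e2⟩ <;> rw [e1, e2]
  · obtain ⟨u1, u2, u3⟩ := hP j i hij.symm
    exact ⟨u1, u2, by linarith⟩
  · obtain ⟨u1, u2, u3⟩ := hP j i hij.symm
    exact ⟨u1, u2, by linarith⟩
  · exact hP i j hij

lemma swapPair_isDet {N : ℕ} {P : Fin N → Fin N → ℝ} (hD : IsDet P)
    (a b : Fin N) : IsDet (swapPair P a b) := by
  intro i j hij
  rcases swapPair_cases P a b i j hij with ⟨e1, _, rfl, rfl⟩ | ⟨e1, _, rfl, rfl⟩ |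
    ⟨e1, _⟩ <;> rw [e1]
  · exact hD j i hij.symm
  · exact hD j i hij.symm
  · exact hD i j hij


end AuxLemmas

/-- perturbing the matches in `S` from `(0,1)` to `(ε, 1-ε)`, where
`c` of them are crucial, gives winning probability `1 - cε + ε² Q(ε)`. -/
theorem det_perturbation_linear_term (n : ℕ)
    (P : Fin (2 ^ n) → Fin (2 ^ n) → ℝ) (hP : IsCompMatrix P) (hdet : IsDet P)
    (σ : BT (Fin (2 ^ n)) n) (hσ : IsDraw σ)
    (istar : Fin (2 ^ n)) (hwin : wd P σ istar = 1)
    (S : Finset (Fin (2 ^ n) × Fin (2 ^ n)))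
    (hS : ∀ q ∈ S, q.1 ≠ q.2 ∧ P q.1 q.2 = 1) :
    ∃ Q : Polynomial ℝ, ∀ ε ∈ Set.Icc (0 : ℝ) 1,
      wd (detPerturb P S ε) σ istar =
        1 - ({q : Fin (2 ^ n) × Fin (2 ^ n) |
                q ∈ S ∧ Crucial P σ istar q.1 q.2}.ncard : ℝ) * ε +
          ε ^ 2 * Q.eval ε := by
  classical
  have hnd : σ.leaves.Nodup := by
    rw [List.nodup_iff_count_le_one]
    intro a
    exact le_of_eq (hσ a)
  have hS' : ∀ q ∈ S, q.1 ≠ q.2 ∧ P q.1 q.2 = 1 ∧ P q.2 q.1 = 0 := by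
    intro q hq
    obtain ⟨h1, h2⟩ := hS q hq
    refine ⟨h1, h2, ?_⟩
    have := (hP q.1 q.2 h1).2.2
    linarith
  obtain ⟨R, hRe, hR0, hR1⟩ := key_induction σ hnd istar S P hS'
  have hval : ∀ q ∈ S, wd (swapPair P q.1 q.2) σ istar - wd P σ istar =
      -(if Crucial P σ istar q.1 q.2 then (1 : ℝ) else 0) := by
    intro q hq
    obtain ⟨h1, h2, _⟩ := hS' q hq
    rw [hwin]
    by_cases hc : Crucial P σ istar q.1 q.2
    · rw [if_pos hc, hc.2.2]
      ring
    · rw [if_neg hc]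
      obtain ⟨w, _, hw⟩ := wd_det_indicator (swapPair_isCompMatrix hP q.1 q.2)
        (swapPair_isDet hdet q.1 q.2) σ hnd
      have h01 : wd (swapPair P q.1 q.2) σ istar = 0 ∨
          wd (swapPair P q.1 q.2) σ istar = 1 := by
        rw [hw istar]; by_cases h : istar = w <;> simp [h]
      rcases h01 with h | h
      · exact absurd ⟨h1, h2, h⟩ hc
      · rw [h]; ring
  set C : Set (Fin (2 ^ n) × Fin (2 ^ n)) :=
    {q : Fin (2 ^ n) × Fin (2 ^ n) | q ∈ S ∧ Crucial P σ istar q.1 q.2} with hCdef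
  have hCcard : (C.ncard : ℝ) =
      ∑ q ∈ S, (if Crucial P σ istar q.1 q.2 then (1 : ℝ) else 0) := by
    have hCeq : C = ↑(S.filter (fun q => Crucial P σ istar q.1 q.2)) := by
      ext q
      simp [hCdef, Finset.mem_filter]
    rw [hCeq, Set.ncard_coe_finset, Finset.sum_boole]
  have hc1 : R.coeff 1 = -(C.ncard : ℝ) := by
    rw [hR1, Finset.sum_congr rfl hval, hCcard, ← Finset.sum_neg_distrib]
  have e1 : ∀ (p : Polynomial ℝ) (x : ℝ), p.eval x = p.divX.eval x * x + p.coeff 0 := by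
    intro p x
    conv_lhs => rw [← Polynomial.divX_mul_X_add p]
    simp
  refine ⟨R.divX.divX, fun ε _ => ?_⟩
  rw [hRe ε, e1 R ε, e1 R.divX ε, Polynomial.coeff_divX, hc1, hR0, hwin]
  ring
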